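/- Let f be a raked trigonometric polynomial of degree at most 2k-1 with zero constant term, f not identically zero, and let t_1,...,t_n be distinct roots of f on the circle with multiplicities m_1,...,m_n, such that no two of the t_i are antipodal (t_i ≠ t_j + π for all i, j). Then m_1 + ... + m_n ≤ 2k-1. -/

import Mathlib

open Real Finset

section Aux
open Polynomial Complex


private lemma iter_deriv_D0 (s : ℕ) (P : Polynomial ℂ) :
    derivative^[s] (X * derivative P) =
      X * derivative^[s+1] P + C (s : ℂ) * derivative^[s] P := by
  induction s with
  | zero => simp
  | succ s ih =>
    rw [Function.iterate_succ_apply', ih]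
    rw [show derivative^[s+1+1] P = derivative (derivative^[s+1] P) from
      (Function.iterate_succ_apply' _ _ _),
      show derivative^[s+1] P = derivative (derivative^[s] P) from
      (Function.iterate_succ_apply' _ _ _)]
    simp only [derivative_add, derivative_mul, derivative_X, derivative_C, one_mul, zero_mul]
    push_cast
    simp only [C_add, C_1]
    ring

private lemma D0_eval {z0 : ℂ} :
    ∀ (r : ℕ) (P : Polynomial ℂ), (∀ s < r, (derivative^[s] P).eval z0 = 0) →
      ((fun Q => X * derivative Q)^[r] P).eval z0 = z0 ^ r * (derivative^[r] P).eval z0 := by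
  intro r
  induction r with
  | zero => intro P _; simp
  | succ r ih =>
    intro P h
    have key : ∀ s < r + 1, eval z0 ((⇑derivative)^[s] P) = 0 := h
    rw [Function.iterate_succ_apply, ih _ (fun s hs => by
      rw [iter_deriv_D0]
      have h1 := h (s+1) (by omega)
      rw [Function.iterate_succ_apply] at h1
      simp [h1, h s (by omega)]), iter_deriv_D0]
    have h1 := h r (by omega)
    simp only [eval_add, eval_mul, eval_X, eval_C, h1, mul_zero, add_zero]
    have h2 : derivative^[r+1] P = derivative^[r] (derivative P) := Function.iterate_succ_apply _ _ _
    rw [h2]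
    ring

private lemma deriv_vanish_of_D0 {z0 : ℂ} (hz : z0 ≠ 0) (P : Polynomial ℂ) (M : ℕ)
    (h : ∀ r < M, ((fun Q => X * derivative Q)^[r] P).eval z0 = 0) :
    ∀ r < M, (derivative^[r] P).eval z0 = 0 := by
  intro r
  induction r using Nat.strong_induction_on with
  | _ r ih =>
    intro hr
    have h2 := D0_eval r P (fun s hs => ih s hs (hs.trans hr))
    rw [h r hr] at h2
    exact (mul_eq_zero.mp h2.symm).resolve_left (pow_ne_zero _ hz)


private lemma my_iteratedDeriv_add {n : ℕ} {f g : ℝ → ℂ} (hf : ContDiff ℝ (⊤:ℕ∞) f)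
    (hg : ContDiff ℝ (⊤:ℕ∞) g) (x : ℝ) :
    iteratedDeriv n (fun t => f t + g t) x = iteratedDeriv n f x + iteratedDeriv n g x := by
  simp only [iteratedDeriv_eq_iteratedFDeriv]
  rw [show (fun t => f t + g t) = f + g from rfl,
    iteratedFDeriv_add_apply (hf.of_le (mod_cast le_top)).contDiffAt (hg.of_le (mod_cast le_top)).contDiffAt]
  simp

private lemma vanish_mul (M : ℕ) (u v : ℝ → ℂ) (hu : ContDiff ℝ (⊤:ℕ∞) u) (hv : ContDiff ℝ (⊤:ℕ∞) v)
    (t0 : ℝ) (h : ∀ s ≤ M, iteratedDeriv s v t0 = 0) :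
    iteratedDeriv M (fun t => u t * v t) t0 = 0 := by
  induction M generalizing u v with
  | zero =>
    have h0 := h 0 le_rfl
    simp only [iteratedDeriv_zero] at h0 ⊢
    simp [h0]
  | succ M ih =>
    rw [iteratedDeriv_succ']
    have hd : deriv (fun t => u t * v t) = fun t => deriv u t * v t + u t * deriv v t := by
      funext s
      exact deriv_mul ((hu.differentiable (by simp)) s)
        ((hv.differentiable (by simp)) s)
    rw [hd]
    have hu' : ContDiff ℝ (⊤:ℕ∞) (deriv u) := (contDiff_infty_iff_deriv.mp hu).2
    have hv' : ContDiff ℝ (⊤:ℕ∞) (deriv v) := (contDiff_infty_iff_deriv.mp hv).2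
    rw [my_iteratedDeriv_add (hu'.mul hv) (hu.mul hv'),
      ih (deriv u) v hu' hv (fun s hs => h s (hs.trans (Nat.le_succ _))),
      ih u (deriv v) hu hv' (fun s hs => by
        rw [← iteratedDeriv_succ']
        exact h (s+1) (by omega))]
    simp

private lemma iteratedDeriv_ofReal (f : ℝ → ℝ) (hf : ContDiff ℝ (⊤:ℕ∞) f) (r : ℕ) :
    iteratedDeriv r (fun t => (f t : ℂ)) = fun t => ((iteratedDeriv r f t : ℝ) : ℂ) := by
  induction r with
  | zero => simp
  | succ r ih =>
    rw [iteratedDeriv_succ, iteratedDeriv_succ, ih]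
    funext s
    have : DifferentiableAt ℝ (iteratedDeriv r f) s :=
      (hf.differentiable_iteratedDeriv r (by exact_mod_cast (by simp : (r:ℕ∞) < ⊤))) s
    exact (this.hasDerivAt.ofReal_comp).deriv


private lemma deriv_poly_exp (P : Polynomial ℂ) :
    deriv (fun s : ℝ => P.eval (Complex.exp (s * Complex.I))) =
      fun s : ℝ => (Polynomial.C Complex.I * (X * derivative P)).eval (Complex.exp (s * Complex.I)) := by
  funext s
  have h1 : HasDerivAt (fun w : ℂ => Complex.exp (w * Complex.I)) (Complex.exp (s * Complex.I) * Complex.I) (s : ℂ) :=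
    by
    simpa [Function.comp_def] using (Complex.hasDerivAt_exp _).comp _ ((hasDerivAt_id (s:ℂ)).mul_const Complex.I)
  have h2 : HasDerivAt (fun w : ℂ => P.eval (Complex.exp (w * Complex.I)))
      (P.derivative.eval (Complex.exp (s * Complex.I)) * (Complex.exp (s * Complex.I) * Complex.I)) (s:ℂ) :=
    (P.hasDerivAt _).comp _ h1
  rw [h2.comp_ofReal.deriv]
  simp only [eval_mul, eval_C, eval_X]
  ring

private lemma iteratedDeriv_poly_exp (r : ℕ) (P : Polynomial ℂ) :
    iteratedDeriv r (fun s : ℝ => P.eval (Complex.exp (s * Complex.I))) =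
      fun s : ℝ => (((fun Q => Polynomial.C Complex.I * (X * derivative Q))^[r]) P).eval
        (Complex.exp (s * Complex.I)) := by
  induction r generalizing P with
  | zero => simp
  | succ r ih =>
    rw [iteratedDeriv_succ', deriv_poly_exp, ih, Function.iterate_succ_apply]

private lemma Dc_iter (r : ℕ) (P : Polynomial ℂ) :
    (fun Q => Polynomial.C Complex.I * (X * derivative Q))^[r] P
      = Polynomial.C (Complex.I ^ r) * ((fun Q => X * derivative Q)^[r] P) := by
  induction r with
  | zero => simp
  | succ r ih =>
    rw [Function.iterate_succ_apply', ih, Function.iterate_succ_apply']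
    rw [derivative_C_mul, pow_succ', C_mul]
    ring


section
variable (k : ℕ) (a b : ℕ → ℝ)

noncomputable def myP : Polynomial ℂ :=
  ∑ j ∈ Finset.range k,
    (Polynomial.C (((a j : ℂ) - b j * Complex.I)/2) * X ^ (2*k + 2*j)
      + Polynomial.C (((a j : ℂ) + b j * Complex.I)/2) * X ^ (2*k - 2*j - 2))

lemma myP_natDegree (hk : 1 ≤ k) : (myP k a b).natDegree ≤ 4*k - 2 := by
  apply Polynomial.natDegree_sum_le_of_forall_le
  intro j hj
  simp only [Finset.mem_range] at hj
  apply le_trans (Polynomial.natDegree_add_le _ _)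
  apply max_le <;>
    exact le_trans (Polynomial.natDegree_C_mul_le _ _)
      (by rw [Polynomial.natDegree_X_pow]; omega)

lemma myP_comp_neg : (myP k a b).comp (-X) = myP k a b := by
  unfold myP
  rw [Polynomial.sum_comp]
  apply Finset.sum_congr rfl
  intro j hj
  simp only [Finset.mem_range] at hj
  simp only [Polynomial.add_comp, Polynomial.mul_comp, Polynomial.C_comp, Polynomial.pow_comp,
    Polynomial.X_comp]
  rw [Even.neg_pow ⟨k+j, by ring⟩, Even.neg_pow ⟨k-j-1, by omega⟩]

lemma myP_eval (hk : 1 ≤ k) (s : ℝ) :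
    (myP k a b).eval (Complex.exp (s * Complex.I)) =
      Complex.exp (((2*k-1 : ℕ) : ℂ) * s * Complex.I) *
        ((∑ j ∈ Finset.range k,
          (a j * Real.cos ((2 * (j : ℝ) + 1) * s) + b j * Real.sin ((2 * (j : ℝ) + 1) * s)) : ℝ) : ℂ) := by
  unfold myP
  rw [Polynomial.eval_finset_sum]
  push_cast
  rw [Finset.mul_sum]
  apply Finset.sum_congr rfl
  intro j hj
  simp only [Finset.mem_range] at hj
  simp only [Polynomial.eval_add, Polynomial.eval_mul, Polynomial.eval_C, Polynomial.eval_pow,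
    Polynomial.eval_X]
  rw [← Complex.exp_nat_mul, ← Complex.exp_nat_mul]
  rw [Complex.cos, Complex.sin]
  have e1 : ((2*k + 2*j : ℕ) : ℂ) * (s * Complex.I)
      = ((2*k-1:ℕ):ℂ) * s * Complex.I + (2 * (j:ℂ) + 1) * s * Complex.I := by
    push_cast [Nat.cast_sub (show 1 ≤ 2*k by omega)]
    ring
  have e2 : ((2*k - 2*j - 2 : ℕ) : ℂ) * (s * Complex.I)
      = ((2*k-1:ℕ):ℂ) * s * Complex.I + -((2 * (j:ℂ) + 1) * s) * Complex.I := by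
    have h3 : (2*k - 2*j - 2 : ℕ) = 2*k - (2*j+2) := by omega
    rw [h3]
    push_cast [Nat.cast_sub (show 1 ≤ 2*k by omega), Nat.cast_sub (show 2*j+2 ≤ 2*k by omega)]
    ring
  rw [e1, e2, Complex.exp_add, Complex.exp_add]
  ring
end


private lemma exp_eq_exp_real {x y : ℝ}
    (hxy : Complex.exp (x * Complex.I) = Complex.exp (y * Complex.I)) :
    ∃ nn : ℤ, x - y = 2 * Real.pi * nn := by
  rw [Complex.exp_eq_exp_iff_exists_int] at hxy
  obtain ⟨nn, hn⟩ := hxy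
  refine ⟨nn, ?_⟩
  have h2 : ((x - y - 2*Real.pi*nn : ℝ) : ℂ) * Complex.I = 0 := by
    push_cast
    linear_combination hn
  have h3 : ((x - y - 2*Real.pi*nn : ℝ) : ℂ) = 0 :=
    (mul_eq_zero.mp h2).resolve_right Complex.I_ne_zero
  have h4 : (x - y - 2*Real.pi*nn : ℝ) = 0 := by exact_mod_cast h3
  linarith

end Aux

theorem raked_zero_constant_roots_le (k n : ℕ) (hk : 1 ≤ k)
    (a b : ℕ → ℝ) (f : ℝ → ℝ)
    (hf : ∀ t : ℝ, f t = ∑ j ∈ Finset.range k,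
        (a j * Real.cos ((2 * (j : ℝ) + 1) * t) + b j * Real.sin ((2 * (j : ℝ) + 1) * t)))
    (hne : ∃ t : ℝ, f t ≠ 0)
    (t : Fin n → ℝ) (ht : ∀ i, t i ∈ Set.Ico (0:ℝ) (2 * Real.pi))
    (htinj : Function.Injective t)
    (hanti : ∀ i j, ¬ ∃ z : ℤ, t i - t j - Real.pi = 2 * Real.pi * (z : ℝ))
    (m : Fin n → ℕ) (hm : ∀ i, 1 ≤ m i)
    (hroot : ∀ i, (∀ r < m i, iteratedDeriv r f (t i) = 0) ∧
      iteratedDeriv (m i) f (t i) ≠ 0) :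
    ∑ i, m i ≤ 2 * k - 1 := by
  classical
  -- the associated complex polynomial
  set P : Polynomial ℂ := myP k a b with hPdef
  -- basic smoothness
  have hfc : ContDiff ℝ (⊤:ℕ∞) f := by
    rw [show f = fun s => ∑ j ∈ Finset.range k,
        (a j * Real.cos ((2 * (j : ℝ) + 1) * s) + b j * Real.sin ((2 * (j : ℝ) + 1) * s))
      from funext hf]
    apply ContDiff.sum
    intro j _
    exact (contDiff_const.mul (Real.contDiff_cos.comp
        (contDiff_const.mul contDiff_id))).add
      (contDiff_const.mul (Real.contDiff_sin.comp (contDiff_const.mul contDiff_id)))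
  set u : ℝ → ℂ := fun s => Complex.exp (((2*k-1 : ℕ) : ℂ) * s * Complex.I) with hudef
  set v : ℝ → ℂ := fun s => ((f s : ℝ) : ℂ) with hvdef
  have hu : ContDiff ℝ (⊤:ℕ∞) u :=
    Complex.contDiff_exp.comp ((contDiff_const.mul Complex.ofRealCLM.contDiff).mul contDiff_const)
  have hv : ContDiff ℝ (⊤:ℕ∞) v := Complex.ofRealCLM.contDiff.comp hfc
  have hgeq : (fun s : ℝ => P.eval (Complex.exp (s * Complex.I))) = fun s => u s * v s := by
    funext s
    rw [hPdef, myP_eval k a b hk s]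
    simp only [hudef, hvdef]
    rw [hf s]
  -- P is nonzero
  have hP0 : P ≠ 0 := by
    intro h0
    obtain ⟨s0, hs0⟩ := hne
    apply hs0
    have h1 := myP_eval k a b hk s0
    rw [← hPdef, h0, Polynomial.eval_zero] at h1
    have h2 := (mul_eq_zero.mp h1.symm).resolve_left (Complex.exp_ne_zero _)
    rw [hf s0]
    exact_mod_cast h2
  -- the roots on the unit circle
  set z : Fin n → ℂ := fun i => Complex.exp (t i * Complex.I) with hzdef
  have hz0 : ∀ i, z i ≠ 0 := fun i => Complex.exp_ne_zero _
  have hzinj : ∀ i j, z i = z j → i = j := by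
    intro i j hij
    obtain ⟨nn, hnn⟩ := exp_eq_exp_real hij
    have hpi := Real.pi_pos
    have hti := ht i; have htj := ht j
    simp only [Set.mem_Ico] at hti htj
    have hn1 : (-1 : ℝ) < nn := by nlinarith
    have hn2 : (nn : ℝ) < 1 := by nlinarith
    have hz' : nn = 0 := by
      have h1' : (-1:ℤ) < nn := by exact_mod_cast hn1
      have h2' : nn < (1:ℤ) := by exact_mod_cast hn2
      omega
    rw [hz'] at hnn
    apply htinj
    push_cast at hnn
    linarith
  have hzanti : ∀ i j, z i ≠ - z j := by
    intro i j hij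
    simp only [hzdef] at hij
    have h1 : Complex.exp ((t i : ℝ) * Complex.I) = Complex.exp (((t j + Real.pi : ℝ) : ℂ) * Complex.I) := by
      rw [hij, Complex.ofReal_add, add_mul, Complex.exp_add, Complex.exp_pi_mul_I]
      ring
    obtain ⟨nn, hnn⟩ := exp_eq_exp_real h1
    exact hanti i j ⟨nn, by linarith⟩
  -- divisibility by (Polynomial.X - z i)^(m i)
  have hdvd1 : ∀ i, (Polynomial.X - Polynomial.C (z i)) ^ (m i) ∣ P := by
    intro i
    have hvv : ∀ r < m i, iteratedDeriv r v (t i) = 0 := by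
      intro r hr
      rw [hvdef, iteratedDeriv_ofReal f hfc]
      simp [(hroot i).1 r hr]
    have hDc : ∀ r < m i,
        (((fun Q => Polynomial.C Complex.I * (Polynomial.X * Polynomial.derivative Q))^[r]) P).eval (z i)
          = 0 := by
      intro r hr
      have h1 := congrFun (iteratedDeriv_poly_exp r P) (t i)
      rw [hgeq] at h1
      rw [hzdef]
      simp only
      rw [← h1]
      exact vanish_mul r u v hu hv (t i) (fun s hs => hvv s (lt_of_le_of_lt hs hr))
    have hD0 : ∀ r < m i,
        (((fun Q => Polynomial.X * Polynomial.derivative Q)^[r]) P).eval (z i) = 0 := by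
      intro r hr
      have h1 := hDc r hr
      rw [Dc_iter] at h1
      rw [Polynomial.eval_mul, Polynomial.eval_C] at h1
      exact (mul_eq_zero.mp h1).resolve_left (pow_ne_zero _ Complex.I_ne_zero)
    have hder := deriv_vanish_of_D0 (hz0 i) P (m i) hD0
    have hrm : m i ≤ P.rootMultiplicity (z i) := by
      have h1 := Polynomial.lt_rootMultiplicity_of_isRoot_iterate_derivative_of_mem_nonZeroDivisors
        (n := m i - 1) hP0 (fun r hr => hder r (by have := hm i; omega))
        (mem_nonZeroDivisors_of_ne_zero (by
          exact_mod_cast (Nat.factorial_ne_zero (m i - 1))))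
      have := hm i; omega
    exact dvd_trans (pow_dvd_pow _ hrm) (P.pow_rootMultiplicity_dvd (z i))
  -- divisibility by (Polynomial.X + z i)^(m i) via evenness
  have hdvd2 : ∀ i, (Polynomial.X - Polynomial.C (- z i)) ^ (m i) ∣ P := by
    intro i
    obtain ⟨R, hR⟩ := hdvd1 i
    refine ⟨(-1 : Polynomial ℂ) ^ (m i) * R.comp (-Polynomial.X), ?_⟩
    have h1 := congrArg (fun p => p.comp (-Polynomial.X)) hR
    simp only [Polynomial.mul_comp, Polynomial.pow_comp, Polynomial.sub_comp,
      Polynomial.X_comp, Polynomial.C_comp] at h1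
    rw [hPdef, myP_comp_neg k a b] at h1
    rw [hPdef, h1]
    rw [show (-Polynomial.X - Polynomial.C (z i) : Polynomial ℂ)
        = -(Polynomial.X - Polynomial.C (- z i)) by rw [map_neg]; ring, neg_pow]
    ring
  -- combined divisibility
  set q : Fin n → Polynomial ℂ :=
    fun i => ((Polynomial.X - Polynomial.C (z i)) * (Polynomial.X - Polynomial.C (- z i))) ^ (m i) with hqdef
  have hcop : ∀ (α β : ℂ), α ≠ β →
      IsCoprime (Polynomial.X - Polynomial.C α : Polynomial ℂ) (Polynomial.X - Polynomial.C β) :=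
    fun α β h => Polynomial.isCoprime_X_sub_C_of_isUnit_sub
      (isUnit_iff_ne_zero.mpr (sub_ne_zero_of_ne h))
  have hqdvd : ∀ i, q i ∣ P := by
    intro i
    rw [hqdef]
    simp only [mul_pow]
    refine IsCoprime.mul_dvd ?_ (hdvd1 i) (hdvd2 i)
    exact (hcop _ _ (by
      intro h
      exact hz0 i (by
        have : (2:ℂ) * z i = 0 := by linear_combination h
        simpa using this))).pow
  have hpair : Pairwise (Function.onFun IsCoprime q) := by
    intro i j hij
    simp only [Function.onFun, hqdef]
    apply IsCoprime.pow
    have h11 := hcop (z i) (z j) (fun h => hij (hzinj i j h))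
    have h12 := hcop (z i) (- z j) (hzanti i j)
    have h21 := hcop (- z i) (z j) (fun h => hzanti j i h.symm)
    have h22 := hcop (- z i) (- z j) (fun h => hij (hzinj i j (by
      have : (-1:ℂ) * z i = (-1) * z j := by linear_combination h
      simpa using this)))
    exact (h11.mul_right h12).mul_left (h21.mul_right h22)
  have hprodvd : (∏ i, q i) ∣ P := Fintype.prod_dvd_of_coprime hpair hqdvd
  have hq0 : ∀ i, q i ≠ 0 := by
    intro i
    rw [hqdef]
    exact pow_ne_zero _ (mul_ne_zero (Polynomial.X_sub_C_ne_zero _) (Polynomial.X_sub_C_ne_zero _))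
  have hdeg : (∏ i, q i).natDegree = ∑ i, (m i * 2) := by
    rw [Polynomial.natDegree_prod _ _ (fun i _ => hq0 i)]
    apply Finset.sum_congr rfl
    intro i _
    rw [hqdef]
    simp only [Polynomial.natDegree_pow]
    rw [Polynomial.natDegree_mul (Polynomial.X_sub_C_ne_zero _) (Polynomial.X_sub_C_ne_zero _),
      Polynomial.natDegree_X_sub_C, Polynomial.natDegree_X_sub_C]
  have hle : (∏ i, q i).natDegree ≤ P.natDegree :=
    Polynomial.natDegree_le_of_dvd hprodvd hP0
  have hPdeg : P.natDegree ≤ 4*k - 2 := myP_natDegree k a b hk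
  rw [hdeg] at hle
  have hsum : ∑ i, (m i * 2) = (∑ i, m i) * 2 := by rw [Finset.sum_mul]
  omega
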